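/- Let α > 0 and let Y be a real random variable on a probability space such that Y and exp(−αY) are integrable. Then the function c ↦ E[exp(α(c − Y)) − α(c − Y) − 1] on ℝ attains its unique minimum at c* = −α⁻¹ log E[exp(−αY)], i.e., at the entropic certainty equivalent EXD_α[Y]. -/

import Mathlib

open MeasureTheory Real

/-- The unconditional form of Proposition 1: on ℝ, the expected Itakura–Saito
loss `c ↦ E[exp(α(c − Y)) − α(c − Y) − 1]` attains its unique minimum at the
entropic certainty equivalent `c* = −α⁻¹ log E[exp(−αY)]`. -/
theorem itakura_saito_unconditional_minimizer
    {Ω : Type*} {m₀ : MeasurableSpace Ω} (μ : Measure Ω) [IsProbabilityMeasure μ]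
    {α : ℝ} (hα : 0 < α)
    (Y : Ω → ℝ) (hYint : Integrable Y μ)
    (hY : Integrable (fun ω => Real.exp (-α * Y ω)) μ)
    (L : ℝ → ℝ)
    (hL : L = fun c => ∫ ω, (Real.exp (α * (c - Y ω)) - α * (c - Y ω) - 1) ∂μ)
    (cstar : ℝ)
    (hcstar : cstar = -α⁻¹ * Real.log (∫ ω, Real.exp (-α * Y ω) ∂μ)) :
    (∀ c : ℝ, L cstar ≤ L c) ∧ (∀ c : ℝ, c ≠ cstar → L cstar < L c) := by
  set M : ℝ := ∫ ω, Real.exp (-α * Y ω) ∂μ with hMdef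
  have hMpos : 0 < M := by
    rw [hMdef]
    refine (integral_pos_iff_support_of_nonneg (fun ω => (Real.exp_pos _).le) hY).mpr ?_
    have : Function.support (fun ω => Real.exp (-α * Y ω)) = Set.univ := by
      ext ω; simp [Function.support, Real.exp_ne_zero]
    rw [this]
    simp
  have key : ∀ c : ℝ, L c =
      Real.exp (α * c) * M - α * c + α * (∫ ω, Y ω ∂μ) - 1 := by
    intro c
    simp only [hL]
    have hfun : (fun ω => Real.exp (α * (c - Y ω)) - α * (c - Y ω) - 1)
        = fun ω => Real.exp (α * c) * Real.exp (-α * Y ω)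
            - (α * c - α * Y ω) - 1 := by
      funext ω
      rw [← Real.exp_add]
      ring_nf
    rw [hfun]
    have h1 : Integrable (fun ω => Real.exp (α * c) * Real.exp (-α * Y ω)) μ :=
      hY.const_mul _
    have h2 : Integrable (fun ω => α * c - α * Y ω) μ :=
      (integrable_const (α * c)).sub (hYint.const_mul α)
    have h12 : Integrable
        (fun ω => Real.exp (α * c) * Real.exp (-α * Y ω) - (α * c - α * Y ω)) μ :=
      h1.sub h2
    rw [integral_sub h12 (integrable_const 1),
        integral_sub h1 h2, integral_const,
        integral_const_mul, integral_sub (integrable_const (α * c)) (hYint.const_mul α),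
        integral_const, integral_const_mul]
    simp [measure_univ, hMdef, neg_mul]
    ring
  have hexp : Real.exp (α * cstar) * M = 1 := by
    rw [hcstar, show α * (-α⁻¹ * Real.log M) = -Real.log M by
      field_simp]
    rw [Real.exp_neg, Real.exp_log hMpos]
    field_simp
  have diff : ∀ c : ℝ, L c - L cstar =
      Real.exp (α * (c - cstar)) - α * (c - cstar) - 1 := by
    intro c
    have hexpc : Real.exp (α * c) * M = Real.exp (α * (c - cstar)) := by
      rw [show α * c = α * (c - cstar) + α * cstar by ring, Real.exp_add,
          mul_assoc, hexp, mul_one]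
    rw [key c, key cstar, hexpc, hexp]
    ring
  constructor
  · intro c
    have h := diff c
    have h2 := Real.add_one_le_exp (α * (c - cstar))
    linarith
  · intro c hc
    have h := diff c
    have hne : α * (c - cstar) ≠ 0 := mul_ne_zero hα.ne' (sub_ne_zero.mpr hc)
    have h2 := Real.add_one_lt_exp hne
    linarith
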